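/- Let A (|U|×|X|) and B (|Y|×|U|) be column-stochastic matrices with A having no zero rows, and suppose the right null space of B is trivial (Bω^T = 0 implies ω = 0). Then (A,B) is non-manipulable if and only if the left null space of A contains no L1-normalized (a_min, 0)-double polarized vector. -/

import Mathlib

open Finset

/-- Minimum row sum of the matrix `A`. -/
noncomputable def Amin {U X : ℕ} [NeZero U] (A : Matrix (Fin U) (Fin X) ℝ) : ℝ :=
  Finset.univ.inf' Finset.univ_nonempty (fun i => ∑ j, A i j)

/-- The constant `a_min = A_min / (|U|(|X| + A_min))`. -/
noncomputable def amin {U X : ℕ} [NeZero U] (A : Matrix (Fin U) (Fin X) ℝ) : ℝ :=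
  Amin A / (U * (X + Amin A))

/-- The observation channel `(A, B)` is manipulable. -/
def Manipulable {U X Y : ℕ} (A : Matrix (Fin U) (Fin X) ℝ)
    (B : Matrix (Fin Y) (Fin U) ℝ) : Prop :=
  ∃ Υ : Matrix (Fin U) (Fin U) ℝ, Υ ≠ 0 ∧
    (∀ j, ∑ i, Υ i j = 0) ∧ (∀ j, 0 ≤ Υ j j) ∧
    (∀ i j, i ≠ j → Υ i j ≤ 0) ∧ B * Υ * A = 0

set_option linter.unusedSectionVars false
set_option maxHeartbeats 1000000


section helpers
variable {U X : ℕ} [NeZero U] [NeZero X] (A : Matrix (Fin U) (Fin X) ℝ)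

lemma rowsum_pos (hA0 : ∀ i j, 0 ≤ A i j) (hArow : ∀ i, ∃ j, A i j ≠ 0) (i : Fin U) :
    0 < ∑ j, A i j := by
  obtain ⟨j, hj⟩ := hArow i
  exact Finset.sum_pos' (fun l _ => hA0 i l)
    ⟨j, Finset.mem_univ j, lt_of_le_of_ne (hA0 i j) (Ne.symm hj)⟩

lemma Amin_pos (hA0 : ∀ i j, 0 ≤ A i j) (hArow : ∀ i, ∃ j, A i j ≠ 0) :
    0 < Amin A := by
  rw [Amin, Finset.lt_inf'_iff]
  exact fun i _ => rowsum_pos A hA0 hArow i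

lemma Amin_le (i : Fin U) : Amin A ≤ ∑ j, A i j :=
  Finset.inf'_le _ (Finset.mem_univ i)

lemma rowsum_le_X (hA0 : ∀ i j, 0 ≤ A i j) (hAcol : ∀ j, ∑ i, A i j = 1) (i : Fin U) :
    ∑ j, A i j ≤ X := by
  have h : ∑ i', ∑ j, A i' j = (X : ℝ) := by
    rw [show ∑ i', ∑ j, A i' j = ∑ j, ∑ i', A i' j from Finset.sum_comm]; simp [hAcol]
  calc ∑ j, A i j ≤ ∑ i', ∑ j, A i' j :=
        Finset.single_le_sum (fun i' _ => Finset.sum_nonneg fun j _ => hA0 i' j)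
          (Finset.mem_univ i)
    _ = X := h

lemma amin_pos (hA0 : ∀ i j, 0 ≤ A i j) (hArow : ∀ i, ∃ j, A i j ≠ 0) :
    0 < amin A := by
  have h1 := Amin_pos A hA0 hArow
  have hU : (0:ℝ) < U := by exact_mod_cast Nat.pos_of_ne_zero (NeZero.ne U)
  have hX : (0:ℝ) ≤ X := by positivity
  exact div_pos h1 (by positivity)

lemma ratio_bound (hA0 : ∀ i j, 0 ≤ A i j) (hArow : ∀ i, ∃ j, A i j ≠ 0)
    (r1 r2 : ℝ) (h1 : Amin A ≤ r2) (h2 : r1 ≤ X) (h3 : 0 < r1) (h4 : 0 < r2) :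
    amin A ≤ r2 / (r1 + r2) := by
  have ha := Amin_pos A hA0 hArow
  have hU : (1:ℝ) ≤ U := by exact_mod_cast Nat.one_le_iff_ne_zero.mpr (NeZero.ne U)
  have hX : (0:ℝ) < X := by exact_mod_cast Nat.pos_of_ne_zero (NeZero.ne X)
  rw [amin, div_le_div_iff₀ (by positivity) (by positivity)]
  nlinarith [mul_le_mul h2 h1 ha.le (le_of_lt (lt_of_lt_of_le h3 h2)),
    mul_nonneg (mul_pos h4 (by positivity : (0:ℝ) < (X:ℝ) + Amin A)).le (sub_nonneg.mpr hU)]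

lemma sumsq {n : ℕ} (a b : Fin n → ℝ) :
    ∑ l, (a l - b l) * (a l - b l)
      = (∑ l, a l * a l) + (∑ l, b l * b l) - 2 * ∑ l, a l * b l := by
  rw [Finset.mul_sum, ← Finset.sum_add_distrib, ← Finset.sum_sub_distrib]
  exact Finset.sum_congr rfl fun l _ => by ring

end helpers

lemma easy_dir {U X Y : ℕ} [NeZero U] [NeZero X]
    (A : Matrix (Fin U) (Fin X) ℝ) (B : Matrix (Fin Y) (Fin U) ℝ)
    (hamin : 0 < amin A)
    (hex : ∃ (ω : Fin U → ℝ) (j k : Fin U), j ≠ k ∧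
        (∑ i, |ω i| = 1) ∧ (∀ l, ∑ i, ω i * A i l = 0) ∧
        amin A ≤ ω j ∧ ω k ≤ -(amin A) ∧ ∀ i, i ≠ j → i ≠ k → ω i = 0) :
    Manipulable A B := by
  obtain ⟨ω, j, k, hjk, _hL1, hnull, hωj, hωk, hsupp⟩ := hex
  have hωjpos : 0 < ω j := lt_of_lt_of_le hamin hωj
  have hωkneg : ω k < 0 := lt_of_le_of_lt hωk (by linarith)
  refine ⟨Matrix.of (fun i c => (if i = j then ω c else 0) + (if i = k then -ω c else 0)),
    ?_, ?_, ?_, ?_, ?_⟩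
  · intro h
    have h2 : ((0 : Matrix (Fin U) (Fin U) ℝ)) j j = 0 := rfl
    rw [← h] at h2
    simp only [Matrix.of_apply, if_pos rfl, if_neg hjk, add_zero] at h2
    norm_num at h2
    linarith
  · intro c
    simp [Finset.sum_add_distrib, Finset.sum_ite_eq', hjk]
  · intro c
    simp only [Matrix.of_apply]
    by_cases hcj : c = j
    · subst hcj
      rw [if_pos rfl, if_neg hjk]
      linarith
    · by_cases hck : c = k
      · subst hck
        rw [if_neg hcj, if_pos rfl]
        linarith
      · rw [if_neg hcj, if_neg hck]
        simp [hsupp c hcj hck]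
  · intro i c hic
    simp only [Matrix.of_apply]
    by_cases hij : i = j
    · subst hij
      rw [if_pos rfl, if_neg (by rintro rfl; exact hjk rfl : ¬ i = k)]
      by_cases hck : c = k
      · subst hck; linarith
      · rw [hsupp c (Ne.symm hic) hck]; norm_num
    · by_cases hik : i = k
      · subst hik
        rw [if_neg hij, if_pos rfl]
        by_cases hcj : c = j
        · subst hcj; linarith
        · rw [hsupp c hcj (Ne.symm hic)]; norm_num
      · simp [hij, hik]
  · have hUA : Matrix.of (fun i c => (if i = j then ω c else 0) + (if i = k then -ω c else 0)) * A = 0 := by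
      ext i l
      simp only [Matrix.mul_apply, Matrix.of_apply, Matrix.zero_apply]
      rw [Finset.sum_congr rfl (fun c _ => add_mul _ _ _), Finset.sum_add_distrib]
      have h1 : ∑ c, (if i = j then ω c else 0) * A c l = 0 := by
        by_cases hij : i = j
        · simp only [if_pos hij]; exact hnull l
        · simp [hij]
      have h2 : ∑ c, (if i = k then -ω c else 0) * A c l = 0 := by
        by_cases hik : i = k
        · simp only [if_pos hik]
          rw [Finset.sum_congr rfl (fun c _ => by ring_nf : ∀ c ∈ univ, -ω c * A c l = -(ω c * A c l)),
            Finset.sum_neg_distrib, hnull l, neg_zero]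
        · simp [hik]
      rw [h1, h2, add_zero]
    rw [Matrix.mul_assoc, hUA, Matrix.mul_zero]

lemma hard_dir {U X Y : ℕ} [NeZero U] [NeZero X]
    (A : Matrix (Fin U) (Fin X) ℝ) (B : Matrix (Fin Y) (Fin U) ℝ)
    (hA0 : ∀ i j, 0 ≤ A i j) (hAcol : ∀ j, ∑ i, A i j = 1)
    (hArow : ∀ i, ∃ j, A i j ≠ 0)
    (hBtriv : ∀ ω : Fin U → ℝ, (∀ i, ∑ j, B i j * ω j = 0) → ω = 0)
    (hM : Manipulable A B) :
    ∃ (ω : Fin U → ℝ) (j k : Fin U), j ≠ k ∧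
        (∑ i, |ω i| = 1) ∧ (∀ l, ∑ i, ω i * A i l = 0) ∧
        amin A ≤ ω j ∧ ω k ≤ -(amin A) ∧ ∀ i, i ≠ j → i ≠ k → ω i = 0 := by
  obtain ⟨Υ, hne, hbal, hdiag, hoff, hzero⟩ := hM
  set R : Fin U → ℝ := fun i => ∑ l, A i l with hR
  have hRpos : ∀ i, 0 < R i := rowsum_pos A hA0 hArow
  -- Step 1: Υ * A = 0 entrywise
  have hUA : ∀ i l, ∑ c, Υ i c * A c l = 0 := by
    intro i l
    have h1 : ∀ y, ∑ u, B y u * (∑ c, Υ u c * A c l) = 0 := by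
      intro y
      have h := congrFun (congrFun hzero y) l
      rw [Matrix.mul_assoc] at h
      simpa [Matrix.mul_apply] using h
    exact congrFun (hBtriv _ h1) i
  -- Step 2: row sums against R vanish
  have hrowR : ∀ i, ∑ c, Υ i c * R c = 0 := by
    intro i
    calc ∑ c, Υ i c * R c = ∑ c, ∑ l, Υ i c * A c l :=
          Finset.sum_congr rfl (fun c _ => Finset.mul_sum _ _ _)
      _ = ∑ l, ∑ c, Υ i c * A c l := Finset.sum_comm
      _ = 0 := by simp [hUA]
  -- Step 3: a nonzero row has positive diagonal
  have hdiagpos : ∀ i, (∃ c, Υ i c ≠ 0) → 0 < Υ i i := by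
    rintro i ⟨c0, hc0⟩
    rcases (hdiag i).lt_or_eq with h | h
    · exact h
    · exfalso
      have hle : ∀ c, Υ i c * R c ≤ 0 := by
        intro c
        by_cases hci : c = i
        · subst hci; rw [← h, zero_mul]
        · exact mul_nonpos_of_nonpos_of_nonneg (hoff i c (Ne.symm hci)) (hRpos c).le
      have hall := (Finset.sum_eq_zero_iff_of_nonpos (fun c _ => hle c)).mp (hrowR i)
      have h0 : Υ i c0 = 0 := by
        rcases mul_eq_zero.mp (hall c0 (Finset.mem_univ c0)) with h' | h'
        · exact h'
        · exact absurd h' (hRpos c0).ne'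
      exact hc0 h0
  -- Step 4: zero diagonal means zero column
  have hcolzero : ∀ c, Υ c c = 0 → ∀ i, Υ i c = 0 := by
    intro c hc i
    have hle : ∀ i', Υ i' c ≤ 0 := by
      intro i'
      by_cases h : i' = c
      · subst h; exact le_of_eq hc
      · exact hoff i' c h
    exact (Finset.sum_eq_zero_iff_of_nonpos (fun i' _ => hle i')).mp (hbal c) i
      (Finset.mem_univ i)
  -- Step 5: find a row with a nonzero entry
  have hex0 : ∃ i c, Υ i c ≠ 0 := by
    by_contra h
    push_neg at h
    exact hne (by ext i c; exact h i c)
  obtain ⟨i0, c0, hi0⟩ := hex0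
  -- the set of rows with positive diagonal, and the normalized rows
  set u : Fin U → Fin X → ℝ := fun i l => A i l / R i with hu
  set f : Fin U → ℝ := fun i => ∑ l, u i l * u i l with hf
  set S : Finset (Fin U) := Finset.univ.filter (fun i => 0 < Υ i i) with hS
  have hi0S : i0 ∈ S := by
    rw [hS, Finset.mem_filter]
    exact ⟨Finset.mem_univ _, hdiagpos i0 ⟨c0, hi0⟩⟩
  obtain ⟨j, hjS, hjmax⟩ := Finset.exists_max_image S f ⟨i0, hi0S⟩
  have hjj : 0 < Υ j j := by
    have := Finset.mem_filter.mp hjS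
    exact this.2
  set ip : Fin U → ℝ := fun c => ∑ l, u c l * u j l with hip
  have hipA : ∀ c, ∑ l, A c l * u j l = R c * ip c := by
    intro c
    rw [hip, Finset.mul_sum]
    refine Finset.sum_congr rfl fun l _ => ?_
    have h1 : u c l = A c l / R c := by rw [hu]
    rw [h1]
    field_simp
    exact (mul_div_cancel_right₀ _ (hRpos c).ne').symm
  have key1 : ∑ c, Υ j c * (R c * ip c) = 0 := by
    have h0 : ∑ l, (∑ c, Υ j c * A c l) * u j l = 0 := by simp [hUA]
    calc ∑ c, Υ j c * (R c * ip c) = ∑ c, Υ j c * (∑ l, A c l * u j l) :=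
          Finset.sum_congr rfl fun c _ => by rw [hipA c]
      _ = ∑ c, ∑ l, Υ j c * (A c l * u j l) :=
          Finset.sum_congr rfl fun c _ => Finset.mul_sum _ _ _
      _ = ∑ l, ∑ c, Υ j c * (A c l * u j l) := Finset.sum_comm
      _ = ∑ l, (∑ c, Υ j c * A c l) * u j l := by
          refine Finset.sum_congr rfl fun l _ => ?_
          rw [Finset.sum_mul]
          exact Finset.sum_congr rfl fun c _ => by ring
      _ = 0 := h0
  have hcS : ∀ c, Υ j c ≠ 0 → 0 < Υ c c := by
    intro c hc
    rcases (hdiag c).lt_or_eq with h | h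
    · exact h
    · exact absurd (hcolzero c h.symm j) hc
  have hiple : ∀ c, 0 < Υ c c → ip c ≤ f j := by
    intro c hc
    have hfc : f c ≤ f j := hjmax c (Finset.mem_filter.mpr ⟨Finset.mem_univ _, hc⟩)
    have hsq : (0:ℝ) ≤ ∑ l, (u c l - u j l) * (u c l - u j l) :=
      Finset.sum_nonneg fun l _ => mul_self_nonneg _
    have hexp := sumsq (u c) (u j)
    rw [hexp] at hsq
    have hfj : (∑ l, u c l * u c l) = f c := by rw [hf]
    have hfj2 : (∑ l, u j l * u j l) = f j := by rw [hf]
    have hip2 : (∑ l, u c l * u j l) = ip c := by rw [hip]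
    rw [hfj, hfj2, hip2] at hsq
    linarith
  have key2 : ∑ c, Υ j c * R c * (ip c - f j) = 0 := by
    have h1 : ∑ c, Υ j c * R c * (ip c - f j)
        = ∑ c, (Υ j c * (R c * ip c) - Υ j c * R c * f j) :=
      Finset.sum_congr rfl fun c _ => by ring
    rw [h1, Finset.sum_sub_distrib, key1, ← Finset.sum_mul, hrowR j]
    simp
  have htermnn : ∀ c, 0 ≤ Υ j c * R c * (ip c - f j) := by
    intro c
    by_cases hc : Υ j c = 0
    · simp [hc]
    · by_cases hcj : c = j
      · subst hcj
        have : ip c = f c := by rw [hip, hf]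
        rw [this]
        simp
      · have hneg : Υ j c < 0 := lt_of_le_of_ne (hoff j c (Ne.symm hcj)) hc
        have h1 : ip c - f j ≤ 0 := sub_nonpos.mpr (hiple c (hcS c hc))
        have h2 := mul_nonneg
          (neg_nonneg.mpr (mul_nonpos_of_nonpos_of_nonneg hneg.le (hRpos c).le))
          (neg_nonneg.mpr h1)
        rw [neg_mul_neg] at h2
        exact h2
  have hall0 : ∀ c, Υ j c * R c * (ip c - f j) = 0 := fun c =>
    (Finset.sum_eq_zero_iff_of_nonneg (fun c _ => htermnn c)).mp key2 c (Finset.mem_univ c)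
  -- existence of a strictly negative off-diagonal entry in row j
  have hexc : ∃ c, c ≠ j ∧ Υ j c < 0 := by
    by_contra h
    push_neg at h
    have hsum : ∑ c, Υ j c * R c = Υ j j * R j := by
      apply Finset.sum_eq_single_of_mem j (Finset.mem_univ j)
      intro b _ hb
      have h1 : Υ j b ≤ 0 := hoff j b (Ne.symm hb)
      have h2 : 0 ≤ Υ j b := h b hb
      rw [le_antisymm h1 h2, zero_mul]
    rw [hrowR j] at hsum
    nlinarith [hRpos j]
  obtain ⟨k, hkj, hk⟩ := hexc
  have hk0 : Υ j k * R k ≠ 0 := (mul_neg_of_neg_of_pos hk (hRpos k)).ne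
  have hipk : ip k = f j := by
    rcases mul_eq_zero.mp (hall0 k) with h | h
    · exact absurd h hk0
    · linarith [sub_eq_zero.mp h]
  have hfk : f k ≤ f j := hjmax k (Finset.mem_filter.mpr ⟨Finset.mem_univ _, hcS k hk.ne⟩)
  have hsq0 : ∑ l, (u k l - u j l) * (u k l - u j l) = 0 := by
    have h1 := sumsq (u k) (u j)
    have h2 : (0:ℝ) ≤ ∑ l, (u k l - u j l) * (u k l - u j l) :=
      Finset.sum_nonneg fun l _ => mul_self_nonneg _
    have hfj : (∑ l, u k l * u k l) = f k := by rw [hf]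
    have hfj2 : (∑ l, u j l * u j l) = f j := by rw [hf]
    have hip2 : (∑ l, u k l * u j l) = ip k := by rw [hip]
    rw [hfj, hfj2, hip2] at h1
    linarith
  have hueq : ∀ l, u k l = u j l := by
    intro l
    have h1 := (Finset.sum_eq_zero_iff_of_nonneg
      (fun l _ => mul_self_nonneg (u k l - u j l))).mp hsq0 l (Finset.mem_univ l)
    have h2 := mul_self_eq_zero.mp h1
    linarith [sub_eq_zero.mp h2]
  have hcross : ∀ l, R k * A j l = R j * A k l := by
    intro l
    have h := hueq l
    have h1 : u k l = A k l / R k := by rw [hu]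
    have h2 : u j l = A j l / R j := by rw [hu]
    rw [h1, h2, div_eq_div_iff (hRpos k).ne' (hRpos j).ne'] at h
    linarith
  -- build ω
  have hNpos : 0 < R j + R k := add_pos (hRpos j) (hRpos k)
  have hRkA : R k = ∑ l, A k l := by rw [hR]
  have hRjA : R j = ∑ l, A j l := by rw [hR]
  refine ⟨fun i => if i = j then R k / (R j + R k) else if i = k then -(R j / (R j + R k)) else 0,
    j, k, Ne.symm hkj, ?_, ?_, ?_, ?_, ?_⟩
  · have hsub : ∀ i ∈ Finset.univ, i ∉ ({j, k} : Finset (Fin U)) →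
        |if i = j then R k / (R j + R k) else if i = k then -(R j / (R j + R k)) else 0| = 0 := by
      intro i _ hi
      simp only [Finset.mem_insert, Finset.mem_singleton, not_or] at hi
      rw [if_neg hi.1, if_neg hi.2, abs_zero]
    rw [← Finset.sum_subset (Finset.subset_univ ({j,k} : Finset (Fin U))) hsub]
    rw [Finset.sum_pair (Ne.symm hkj)]
    rw [if_pos rfl, if_neg hkj, if_pos rfl]
    rw [abs_of_nonneg (div_nonneg (hRpos k).le hNpos.le),
      abs_of_nonpos (neg_nonpos.mpr (div_nonneg (hRpos j).le hNpos.le)), neg_neg]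
    field_simp
    ring
  · intro l
    have hsub : ∀ i ∈ Finset.univ, i ∉ ({j, k} : Finset (Fin U)) →
        (if i = j then R k / (R j + R k) else if i = k then -(R j / (R j + R k)) else 0) * A i l = 0 := by
      intro i _ hi
      simp only [Finset.mem_insert, Finset.mem_singleton, not_or] at hi
      rw [if_neg hi.1, if_neg hi.2, zero_mul]
    rw [← Finset.sum_subset (Finset.subset_univ ({j,k} : Finset (Fin U))) hsub]
    rw [Finset.sum_pair (Ne.symm hkj)]
    rw [if_pos rfl, if_neg hkj, if_pos rfl]
    have hc := hcross l
    field_simp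
    linarith
  · beta_reduce
    rw [if_pos rfl]
    have := ratio_bound A hA0 hArow (R j) (R k) (hRkA ▸ Amin_le A k)
      (hRjA ▸ rowsum_le_X A hA0 hAcol j) (hRpos j) (hRpos k)
    exact this
  · beta_reduce
    rw [if_neg hkj, if_pos rfl]
    have h := ratio_bound A hA0 hArow (R k) (R j) (hRjA ▸ Amin_le A j)
      (hRkA ▸ rowsum_le_X A hA0 hAcol k) (hRpos k) (hRpos j)
    have h2 : R k + R j = R j + R k := by ring
    rw [h2] at h
    linarith
  · intro i hij hik
    beta_reduce
    rw [if_neg hij, if_neg hik]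

theorem stmt_9 {U X Y : ℕ} [NeZero U] [NeZero X] [NeZero Y]
    (A : Matrix (Fin U) (Fin X) ℝ) (B : Matrix (Fin Y) (Fin U) ℝ)
    (hA0 : ∀ i j, 0 ≤ A i j) (hAcol : ∀ j, ∑ i, A i j = 1)
    (hArow : ∀ i, ∃ j, A i j ≠ 0)
    (hB0 : ∀ i j, 0 ≤ B i j) (hBcol : ∀ j, ∑ i, B i j = 1)
    (hBtriv : ∀ ω : Fin U → ℝ, (∀ i, ∑ j, B i j * ω j = 0) → ω = 0) :
    ¬ Manipulable A B ↔
      ¬ ∃ (ω : Fin U → ℝ) (j k : Fin U), j ≠ k ∧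
        (∑ i, |ω i| = 1) ∧ (∀ l, ∑ i, ω i * A i l = 0) ∧
        amin A ≤ ω j ∧ ω k ≤ -(amin A) ∧ ∀ i, i ≠ j → i ≠ k → ω i = 0 := by
  exact not_congr ⟨fun hM => hard_dir A B hA0 hAcol hArow hBtriv hM,
    fun hex => easy_dir A B (amin_pos A hA0 hArow) hex⟩
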